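/- Let G be a group and let S be an epsilon-strongly G-graded ring. For each g ∈ G let ε_g ∈ S_g S_{g⁻¹} be an element satisfying ε_g s = s ε_{g⁻¹} = s for all s ∈ S_g. Then for every g ∈ G: (1) ε_g is a two-sided multiplicative identity of the ring S_g S_{g⁻¹}; (2) ε_g commutes with every element of S_e; and (3) S_e is a unital ring with multiplicative identity ε_e. -/

import Mathlib

/-- The product `AB` of two additive subgroups of a (possibly non-unital) ring:
the additive subgroup generated by all products `ab` with `a ∈ A`, `b ∈ B`. -/
def sgMul {S : Type*} [NonUnitalRing S] (A B : AddSubgroup S) : AddSubgroup S :=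
  AddSubgroup.closure {x | ∃ a ∈ A, ∃ b ∈ B, x = a * b}

section
variable {G : Type*} [Group G] {S : Type*} [NonUnitalRing S]

/-- A `G`-graded ring `S = ⊕_{g ∈ G} S_g` is *epsilon-strongly `G`-graded* if for every
`g ∈ G` there are `ε ∈ S_g S_{g⁻¹}` and `ε' ∈ S_{g⁻¹} S_g` with `ε s = s` and `s ε' = s`
for all `s ∈ S_g`. -/
def IsEpsilonStronglyGraded (𝒜 : G → AddSubgroup S) : Prop :=
  ∀ g : G, ∃ ε ∈ sgMul (𝒜 g) (𝒜 g⁻¹), ∃ ε' ∈ sgMul (𝒜 g⁻¹) (𝒜 g),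
    ∀ s ∈ 𝒜 g, ε * s = s ∧ s * ε' = s

/-- `S` is *symmetrically `G`-graded* if `S_g S_{g⁻¹} S_g = S_g` for all `g ∈ G`. -/
def IsSymmetricallyGraded (𝒜 : G → AddSubgroup S) : Prop :=
  ∀ g : G, sgMul (sgMul (𝒜 g) (𝒜 g⁻¹)) (𝒜 g) = 𝒜 g

/-- `S` is *nearly epsilon-strongly `G`-graded* if for every `g ∈ G` and `s ∈ S_g` one has
`s ∈ (S_g S_{g⁻¹}) s` and `s ∈ s (S_{g⁻¹} S_g)`. -/
def IsNearlyEpsilonStronglyGraded (𝒜 : G → AddSubgroup S) : Prop :=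
  ∀ g : G, ∀ s ∈ 𝒜 g,
    (∃ t ∈ sgMul (𝒜 g) (𝒜 g⁻¹), t * s = s) ∧ (∃ t ∈ sgMul (𝒜 g⁻¹) (𝒜 g), s * t = s)

/-- An additive subgroup of a ring is a *unital* ring if it contains a two-sided
multiplicative identity for itself. -/
def IsUnitalSubgroup (A : AddSubgroup S) : Prop :=
  ∃ u ∈ A, ∀ a ∈ A, u * a = a ∧ a * u = a

/-- An additive subgroup of a ring is an *s-unital* ring if `t ∈ At` and `t ∈ tA`
for every `t ∈ A`. -/
def IsSUnitalSubgroup (A : AddSubgroup S) : Prop :=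
  ∀ t ∈ A, (∃ a ∈ A, a * t = t) ∧ (∃ b ∈ A, t * b = t)

end

/-- Let `S` be epsilon-strongly `G`-graded and for each `g ∈ G` let
`ε_g ∈ S_g S_{g⁻¹}` satisfy `ε_g s = s ε_{g⁻¹} = s` for all `s ∈ S_g`. Then for every
`g ∈ G`: (1) `ε_g` is a two-sided multiplicative identity of the ring `S_g S_{g⁻¹}`;
(2) `ε_g` commutes with every element of `S_e`; and (3) `S_e` is a unital ring with
multiplicative identity `ε_e`. -/
theorem eps_identity_central_and_unital_component
    {G : Type*} [Group G] [DecidableEq G] {S : Type*} [NonUnitalRing S]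
    (𝒜 : G → AddSubgroup S)
    (hmul : ∀ (g h : G), ∀ a ∈ 𝒜 g, ∀ b ∈ 𝒜 h, a * b ∈ 𝒜 (g * h))
    (hdecomp : DirectSum.IsInternal 𝒜)
    (ε : G → S)
    (hmem : ∀ g : G, ε g ∈ sgMul (𝒜 g) (𝒜 g⁻¹))
    (hid : ∀ g : G, ∀ s ∈ 𝒜 g, ε g * s = s ∧ s * ε g⁻¹ = s)
    (g : G) :
    (∀ x ∈ sgMul (𝒜 g) (𝒜 g⁻¹), ε g * x = x ∧ x * ε g = x) ∧
    (∀ x ∈ 𝒜 (1 : G), ε g * x = x * ε g) ∧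
    (ε 1 ∈ 𝒜 (1 : G) ∧ ∀ x ∈ 𝒜 (1 : G), ε 1 * x = x ∧ x * ε 1 = x) := by
  have hleft : ∀ x ∈ sgMul (𝒜 g) (𝒜 g⁻¹), ε g * x = x := by
    intro x hx
    induction hx using AddSubgroup.closure_induction with
    | mem y hy =>
        obtain ⟨a, ha, b, hb, rfl⟩ := hy
        rw [← mul_assoc, (hid g a ha).1]
    | zero => exact mul_zero _
    | add y z _ _ hy hz => rw [mul_add, hy, hz]
    | neg y _ hy => rw [mul_neg, hy]
  have hright : ∀ x ∈ sgMul (𝒜 g) (𝒜 g⁻¹), x * ε g = x := by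
    intro x hx
    induction hx using AddSubgroup.closure_induction with
    | mem y hy =>
        obtain ⟨a, ha, b, hb, rfl⟩ := hy
        have := (hid g⁻¹ b hb).2
        rw [inv_inv] at this
        rw [mul_assoc, this]
    | zero => exact zero_mul _
    | add y z _ _ hy hz => rw [add_mul, hy, hz]
    | neg y _ hy => rw [neg_mul, hy]
  have hR : ∀ x ∈ 𝒜 (1 : G), ∀ t ∈ sgMul (𝒜 g) (𝒜 g⁻¹), t * x ∈ sgMul (𝒜 g) (𝒜 g⁻¹) := by
    intro x hx t ht
    induction ht using AddSubgroup.closure_induction with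
    | mem y hy =>
        obtain ⟨a, ha, b, hb, rfl⟩ := hy
        rw [mul_assoc]
        refine AddSubgroup.subset_closure ⟨a, ha, b * x, ?_, rfl⟩
        simpa using hmul g⁻¹ 1 b hb x hx
    | zero => simpa using AddSubgroup.zero_mem _
    | add y z _ _ hy hz => rw [add_mul]; exact AddSubgroup.add_mem _ hy hz
    | neg y _ hy => rw [neg_mul]; exact AddSubgroup.neg_mem _ hy
  have hL : ∀ x ∈ 𝒜 (1 : G), ∀ t ∈ sgMul (𝒜 g) (𝒜 g⁻¹), x * t ∈ sgMul (𝒜 g) (𝒜 g⁻¹) := by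
    intro x hx t ht
    induction ht using AddSubgroup.closure_induction with
    | mem y hy =>
        obtain ⟨a, ha, b, hb, rfl⟩ := hy
        rw [← mul_assoc]
        refine AddSubgroup.subset_closure ⟨x * a, ?_, b, hb, rfl⟩
        simpa using hmul 1 g x hx a ha
    | zero => simpa using AddSubgroup.zero_mem _
    | add y z _ _ hy hz => rw [mul_add]; exact AddSubgroup.add_mem _ hy hz
    | neg y _ hy => rw [mul_neg]; exact AddSubgroup.neg_mem _ hy
  refine ⟨fun x hx => ⟨hleft x hx, hright x hx⟩, ?_, ?_, ?_⟩
  · intro x hx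
    calc ε g * x = ε g * x * ε g := (hright _ (hR x hx _ (hmem g))).symm
    _ = ε g * (x * ε g) := mul_assoc _ _ _
    _ = x * ε g := hleft _ (hL x hx _ (hmem g))
  · have hsub : sgMul (𝒜 (1:G)) (𝒜 (1:G)⁻¹) ≤ 𝒜 (1 : G) := by
      apply AddSubgroup.closure_le _ |>.mpr
      rintro x ⟨a, ha, b, hb, rfl⟩
      simpa using hmul 1 1⁻¹ a ha b hb
    exact hsub (hmem 1)
  · intro x hx
    refine ⟨(hid 1 x hx).1, ?_⟩
    have := (hid 1 x hx).2
    rwa [inv_one] at this
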